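/- Let N be a positive natural number, δ ∈ (0,1) with ⌈(1-δ)·(N+1)⌉ ≤ N, and let s₁, ..., s_{N+1} be real-valued random variables on a probability space (Ω, P) that are exchangeable, i.e., for every permutation σ of {1, ..., N+1}, the random vector (s_{σ(1)}, ..., s_{σ(N+1)}) has the same joint law as (s₁, ..., s_{N+1}). Let q denote the k-th smallest value among s₁, ..., s_N, where k = ⌈(1-δ)·(N+1)⌉. Then P(s_{N+1} ≤ q) ≥ 1 - δ. -/

import Mathlib

open MeasureTheory ENNReal

/-- The `k`-th smallest value (1-indexed) of a list of reals. -/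
noncomputable def kthSmallest (l : List ℝ) (k : ℕ) : ℝ :=
  (l.mergeSort (fun a b => a ≤ b))[k - 1]!

namespace Stmt13Aux

open Classical in
/-- count over a tuple -/
noncomputable def cnt {n : ℕ} (j : Fin n) (v : Fin n → ℝ) : ℕ :=
  ∑ i, if v i < v j then 1 else 0

lemma measurable_cnt {n : ℕ} (j : Fin n) : Measurable (cnt (j := j)) := by
  unfold cnt
  apply Finset.measurable_sum
  intro i _
  exact Measurable.ite
    (measurableSet_lt (measurable_pi_apply i) (measurable_pi_apply j))
    measurable_const measurable_const

open Classical in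
lemma countP_ofFn {n : ℕ} (f : Fin n → ℝ) (x : ℝ) :
    (List.ofFn f).countP (fun a => decide (a < x)) = ∑ i, if f i < x then 1 else 0 := by
  induction n with
  | zero => simp
  | succ n ih =>
    rw [List.ofFn_succ, List.countP_cons, Fin.sum_univ_succ, ih (f := fun i => f i.succ)]
    by_cases h : f 0 < x <;> simp [h, add_comm]

open Classical in
lemma le_kthSmallest_iff (l : List ℝ) (k : ℕ) (hk1 : 1 ≤ k) (hkl : k ≤ l.length) (x : ℝ) :
    x ≤ kthSmallest l k ↔ l.countP (fun a => decide (a < x)) < k := by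
  rw [kthSmallest]
  set l' := l.mergeSort (fun a b => a ≤ b) with hl'
  have hperm : l'.Perm l := List.mergeSort_perm l _
  have hlen : l'.length = l.length := hperm.length_eq
  have hsorted : List.Pairwise (fun a b : ℝ => a ≤ b) l' := by
    have h := List.pairwise_mergeSort (le := fun a b : ℝ => decide (a ≤ b))
      (fun a b c hab hbc => by simp only [decide_eq_true_eq] at *; exact le_trans hab hbc)
      (fun a b => by simpa using le_total a b) l
    exact h.imp (by simp)
  have hpair := List.pairwise_iff_getElem.mp hsorted
  have hmono : ∀ (i j : ℕ) (hi : i < l'.length) (hj : j < l'.length), i ≤ j → l'[i] ≤ l'[j] := by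
    intro i j hi hj hij
    rcases Nat.lt_or_ge i j with h | h
    · exact hpair i j hi hj h
    · have : i = j := le_antisymm hij h
      subst this; rfl
  have hidx : k - 1 < l'.length := by omega
  rw [getElem!_pos l' (k-1) hidx, ← hperm.countP_eq]
  constructor
  · intro hx
    have h0 : (l'.drop (k-1)).countP (fun a => decide (a < x)) = 0 := by
      apply List.countP_eq_zero.mpr
      intro a ha
      obtain ⟨i, hi, rfl⟩ := List.mem_iff_getElem.mp ha
      rw [List.getElem_drop]
      simp only [decide_eq_true_eq, not_lt]
      refine le_trans hx (hmono _ _ hidx ?_ (Nat.le_add_right _ _))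
      have := hi; simp only [List.length_drop] at this; omega
    calc l'.countP (fun a => decide (a < x))
        = (l'.take (k-1)).countP (fun a => decide (a < x))
          + (l'.drop (k-1)).countP (fun a => decide (a < x)) := by
          rw [← List.countP_append]; rw [List.take_append_drop]
      _ = (l'.take (k-1)).countP (fun a => decide (a < x)) := by rw [h0, add_zero]
      _ ≤ (l'.take (k-1)).length := List.countP_le_length
      _ ≤ k - 1 := by simp [List.length_take]
      _ < k := by omega
  · intro hcount
    by_contra hx
    push_neg at hx
    have hall : (l'.take k).countP (fun a => decide (a < x)) = (l'.take k).length := by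
      apply List.countP_eq_length.mpr
      intro a ha
      obtain ⟨i, hi, rfl⟩ := List.mem_iff_getElem.mp ha
      rw [List.getElem_take]
      simp only [decide_eq_true_eq]
      have hilt : i < l'.length := by
        have := hi; simp only [List.length_take] at this; omega
      refine lt_of_le_of_lt (hmono i (k-1) hilt hidx ?_) hx
      have := hi; simp only [List.length_take] at this; omega
    have hlenk : (l'.take k).length = k := by simp [List.length_take]; omega
    have : k ≤ l'.countP (fun a => decide (a < x)) := by
      calc k = (l'.take k).countP (fun a => decide (a < x)) := by rw [hall, hlenk]
        _ ≤ (l'.take k).countP (fun a => decide (a < x))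
            + (l'.drop k).countP (fun a => decide (a < x)) := Nat.le_add_right _ _
        _ = l'.countP (fun a => decide (a < x)) := by
            rw [← List.countP_append, List.take_append_drop]
    omega

open Classical in
lemma card_filter_val_lt (n m : ℕ) (hm : m ≤ n) :
    (Finset.univ.filter fun r : Fin n => (r : ℕ) < m).card = m := by
  rw [Finset.card_filter, Fin.sum_univ_eq_sum_range (fun i => if i < m then 1 else 0),
    ← Finset.card_filter]
  have : (Finset.range n).filter (fun i => i < m) = Finset.range m := by
    ext i; simp only [Finset.mem_filter, Finset.mem_range]; omega
  rw [this, Finset.card_range]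

open Classical in
lemma cnt_lower {n : ℕ} (k : ℕ) (hk : k ≤ n) (v : Fin n → ℝ) :
    k ≤ (Finset.univ.filter fun j : Fin n => cnt j v < k).card := by
  set σ := Tuple.sort v with hσ
  have hmono := Tuple.monotone_sort v
  have hsub : (Finset.univ.filter fun r : Fin n => (r : ℕ) < k).image σ ⊆
      Finset.univ.filter fun j => cnt j v < k := by
    intro j hj
    simp only [Finset.mem_image, Finset.mem_filter, Finset.mem_univ, true_and] at hj ⊢
    obtain ⟨r, hr, rfl⟩ := hj
    unfold cnt
    calc ∑ i, (if v i < v (σ r) then 1 else 0)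
        = ∑ p, (if v (σ p) < v (σ r) then 1 else 0) :=
          (Equiv.sum_comp σ (fun i => if v i < v (σ r) then 1 else 0)).symm
      _ ≤ ∑ p : Fin n, (if (p : ℕ) < (r : ℕ) then 1 else 0) := by
          apply Finset.sum_le_sum; intro p _
          by_cases h : v (σ p) < v (σ r)
          · have hpr : (p : ℕ) < (r : ℕ) := by
              by_contra hpr
              have hrp : r ≤ p := Fin.le_def.mpr (by omega)
              exact absurd (hmono hrp) (not_le.mpr h)
            simp [h, hpr]
          · simp [h]
      _ = (Finset.univ.filter fun p : Fin n => (p : ℕ) < (r : ℕ)).card :=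
          (Finset.card_filter _ _).symm
      _ = (r : ℕ) := card_filter_val_lt n r (le_of_lt r.isLt)
      _ < k := hr
  have h := Finset.card_le_card hsub
  rwa [Finset.card_image_of_injective _ σ.injective, card_filter_val_lt n k hk] at h

end Stmt13Aux

open Stmt13Aux in
theorem stmt13 (N : ℕ) (hN : 0 < N) (δ : ℝ) (hδ : δ ∈ Set.Ioo (0 : ℝ) 1)
    (Ω : Type*) [MeasurableSpace Ω] (P : Measure Ω) [IsProbabilityMeasure P]
    (s : Fin (N + 1) → Ω → ℝ) (hmeas : ∀ i, Measurable (s i))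
    (hexch : ∀ σ : Equiv.Perm (Fin (N + 1)),
      Measure.map (fun ω => (fun i => s (σ i) ω)) P
        = Measure.map (fun ω => (fun i => s i ω)) P)
    (k : ℕ) (hk : k = ⌈(1 - δ) * ((N : ℝ) + 1)⌉₊) (hkN : k ≤ N) :
    ENNReal.ofReal (1 - δ) ≤
      P {ω | s (Fin.last N) ω ≤
        kthSmallest (List.ofFn fun i : Fin N => s i.castSucc ω) k} := by
  classical
  obtain ⟨hδ0, hδ1⟩ := hδ
  have hk1 : 1 ≤ k := by
    rw [hk]
    exact Nat.ceil_pos.mpr (mul_pos (by linarith) (by positivity))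
  set vec : Ω → (Fin (N+1) → ℝ) := fun ω i => s i ω with hvecdef
  have hvec : Measurable vec := measurable_pi_lambda _ hmeas
  set μ := Measure.map vec P with hμdef
  have hμprob : IsProbabilityMeasure μ := Measure.isProbabilityMeasure_map hvec.aemeasurable
  set E : Fin (N+1) → Set (Fin (N+1) → ℝ) := fun j => {v | cnt j v < k} with hEdef
  have hE : ∀ j, MeasurableSet (E j) := fun j =>
    measurable_cnt j (MeasurableSet.of_discrete (s := {m : ℕ | m < k}))
  -- target set equals preimage of E (last)
  have htarget : {ω | s (Fin.last N) ω ≤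
      kthSmallest (List.ofFn fun i : Fin N => s i.castSucc ω) k}
      = vec ⁻¹' (E (Fin.last N)) := by
    ext ω
    simp only [Set.mem_setOf_eq, Set.mem_preimage, hEdef, hvecdef]
    rw [le_kthSmallest_iff _ k hk1 (by simp [List.length_ofFn]; omega),
      countP_ofFn]
    unfold cnt
    rw [Fin.sum_univ_castSucc]
    simp [lt_irrefl]
  -- all E j have the same measure
  have hμE : ∀ j, μ (E j) = μ (E (Fin.last N)) := by
    intro j
    set σ := Equiv.swap j (Fin.last N) with hσ
    have hvecσ : Measurable (fun ω => (fun i => s (σ i) ω)) :=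
      measurable_pi_lambda _ (fun i => hmeas (σ i))
    have hpre : (fun ω => (fun i => s (σ i) ω)) ⁻¹' (E (Fin.last N)) = vec ⁻¹' (E j) := by
      ext ω
      simp only [Set.mem_preimage, hEdef, Set.mem_setOf_eq, hvecdef]
      unfold cnt
      have hσl : σ (Fin.last N) = j := Equiv.swap_apply_right _ _
      show (∑ i : Fin (N+1), if s (σ i) ω < s (σ (Fin.last N)) ω then 1 else 0) < k ↔
        (∑ i : Fin (N+1), if s i ω < s j ω then 1 else 0) < k
      rw [hσl, Equiv.sum_comp σ (fun i => if s i ω < s j ω then 1 else 0)]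
    calc μ (E j) = P (vec ⁻¹' E j) := Measure.map_apply hvec (hE j)
      _ = P ((fun ω => (fun i => s (σ i) ω)) ⁻¹' E (Fin.last N)) := by rw [hpre]
      _ = (Measure.map (fun ω => (fun i => s (σ i) ω)) P) (E (Fin.last N)) :=
          (Measure.map_apply hvecσ (hE _)).symm
      _ = μ (E (Fin.last N)) := by rw [hexch σ, hμdef]
  -- counting bound, pointwise
  have hcount : ∀ v : Fin (N+1) → ℝ,
      (k : ℝ≥0∞) ≤ ∑ j, (E j).indicator (fun _ => 1) v := by
    intro v
    have h := cnt_lower k (by omega) v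
    calc (k : ℝ≥0∞)
        ≤ ((Finset.univ.filter fun j : Fin (N+1) => cnt j v < k).card : ℝ≥0∞) := by
          exact_mod_cast h
      _ = ∑ j, if cnt j v < k then 1 else 0 := by
          rw [Finset.card_filter]; push_cast; rfl
      _ = ∑ j, (E j).indicator (fun _ => 1) v := by
          refine Finset.sum_congr rfl fun j _ => ?_
          simp [Set.indicator_apply, hEdef]
  -- integrate
  have h1 : (k : ℝ≥0∞) ≤ ∑ j, μ (E j) := by
    calc (k : ℝ≥0∞) = ∫⁻ _x, (k : ℝ≥0∞) ∂μ := by simp [lintegral_const]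
      _ ≤ ∫⁻ v, ∑ j, (E j).indicator (fun _ => 1) v ∂μ := lintegral_mono hcount
      _ = ∑ j, ∫⁻ v, (E j).indicator (fun _ => 1) v ∂μ :=
          lintegral_finset_sum _ (fun j _ => measurable_const.indicator (hE j))
      _ = ∑ j, μ (E j) := by
          refine Finset.sum_congr rfl fun j _ => ?_
          rw [lintegral_indicator (hE j)]
          simp
  have h2 : (k : ℝ≥0∞) ≤ ((N : ℝ≥0∞) + 1) * μ (E (Fin.last N)) := by
    refine le_trans h1 ?_
    rw [Finset.sum_congr rfl (fun j _ => hμE j), Finset.sum_const, Finset.card_univ]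
    simp only [Fintype.card_fin, nsmul_eq_mul]
    push_cast
    exact le_refl _
  -- arithmetic conclusion
  have h3 : ENNReal.ofReal (1 - δ) * ((N : ℝ≥0∞) + 1) ≤ (k : ℝ≥0∞) := by
    calc ENNReal.ofReal (1 - δ) * ((N : ℝ≥0∞) + 1)
        = ENNReal.ofReal ((1 - δ) * ((N : ℝ) + 1)) := by
          rw [ENNReal.ofReal_mul (by linarith)]
          congr 1
          rw [ENNReal.ofReal_add (by positivity) zero_le_one, ENNReal.ofReal_natCast,
            ENNReal.ofReal_one]
      _ ≤ (k : ℝ≥0∞) := by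
          rw [← ENNReal.ofReal_natCast k]
          exact ENNReal.ofReal_le_ofReal (hk ▸ Nat.le_ceil _)
  have h4 : ENNReal.ofReal (1 - δ) ≤ μ (E (Fin.last N)) := by
    have hmul : ((N : ℝ≥0∞) + 1) * ENNReal.ofReal (1 - δ)
        ≤ ((N : ℝ≥0∞) + 1) * μ (E (Fin.last N)) := by
      calc ((N : ℝ≥0∞) + 1) * ENNReal.ofReal (1 - δ)
          = ENNReal.ofReal (1 - δ) * ((N : ℝ≥0∞) + 1) := mul_comm _ _
        _ ≤ (k : ℝ≥0∞) := h3
        _ ≤ _ := h2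
    exact (ENNReal.mul_le_mul_iff_right (by simp) (by simp)).mp hmul
  calc ENNReal.ofReal (1 - δ) ≤ μ (E (Fin.last N)) := h4
    _ = P (vec ⁻¹' (E (Fin.last N))) := Measure.map_apply hvec (hE _)
    _ = _ := by rw [← htarget]
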